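/- arXiv:1602.01630 — 4 statements merged into one kernel-verified Lean document; each statement's English description precedes it below -/
import Mathlib

section
/- For every integer n ≥ 2 there exist constants c₃ > 0, c₄ > 0 and Q₀ = Q₀(n) such that for every integer Q > Q₀ and every interval I ⊆ [-1/2, 1/2] of length |I| ≥ c₃·Q^{-1}, the interval I contains at least c₄·Q^n·|I| real algebraic integers α of degree exactly n and height H(α) ≤ Q. -/
open Polynomial

/-- `α` is a real algebraic integer of degree `n` and height at most `Q`:
it is a root of a monic integer polynomial of degree `n`, irreducible over `ℚ`,
all of whose coefficients have absolute value at most `Q`. -/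
def IsRealAlgIntOfHt (n : ℕ) (Q : ℤ) (α : ℝ) : Prop :=
  ∃ P : ℤ[X], P.Monic ∧ P.natDegree = n ∧
    Irreducible (P.map (algebraMap ℤ ℚ)) ∧
    (∀ j, |P.coeff j| ≤ Q) ∧ Polynomial.aeval α P = 0

private def myA (Q : ℕ) : ℤ := 2 * ((Q : ℤ) / 4 + 1)

private def myC (Q : ℕ) (κ : ℕ → ℤ) (m : ℕ) : ℤ :=
  if m = 0 then 0 else (if m = 1 then myA Q else 0) + 2 * κ (m - 1)

private noncomputable def myF (n Q : ℕ) (κ : ℕ → ℤ) (x : ℝ) : ℝ :=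
  x ^ n + ∑ m ∈ Finset.range n, (myC Q κ m : ℝ) * x ^ m

private noncomputable def myB (n Q : ℕ) (κ : ℕ → ℤ) (b : ℝ) : ℤ :=
  4 * ⌈(-(myF n Q κ b) - 2) / 4⌉ + 2

private noncomputable def myP (n Q : ℕ) (κ : ℕ → ℤ) (b : ℝ) (j : ℤ) : ℤ[X] :=
  X ^ n + ((∑ m ∈ Finset.range n, C (myC Q κ m) * X ^ m) + C (myB n Q κ b + 4 * j))

private def κof (n : ℕ) (k : Fin (n - 1) → ℤ) (i : ℕ) : ℤ :=
  if h : i < n - 1 then k ⟨i, h⟩ else 0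

private lemma coeff_myP (n Q : ℕ) (κ : ℕ → ℤ) (b : ℝ) (j : ℤ) (t : ℕ) :
    (myP n Q κ b j).coeff t =
      (if t = n then 1 else 0) + ((if t < n then myC Q κ t else 0)
        + (if t = 0 then myB n Q κ b + 4 * j else 0)) := by
  simp only [myP, coeff_add, coeff_X_pow, finset_sum_coeff, coeff_C_mul_X_pow, coeff_C]
  rw [Finset.sum_ite_eq (Finset.range n) t (fun m => myC Q κ m)]
  simp [Finset.mem_range]

private lemma aeval_myP (n Q : ℕ) (κ : ℕ → ℤ) (b : ℝ) (j : ℤ) (x : ℝ) :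
    aeval x (myP n Q κ b j) = myF n Q κ x + ((myB n Q κ b : ℝ) + 4 * j) := by
  simp only [myP, myF, map_add, map_pow, aeval_X, map_sum, map_mul, aeval_C, map_ofNat,
    eq_intCast, map_intCast]
  ring

private lemma monic_myP (n Q : ℕ) (hn : 1 ≤ n) (κ : ℕ → ℤ) (b : ℝ) (j : ℤ) :
    (myP n Q κ b j).Monic := by
  apply monic_X_pow_add
  rw [Polynomial.degree_lt_iff_coeff_zero]
  intro t ht
  have htn : ¬ (t < n) := by
    intro h; exact absurd ht (by exact_mod_cast not_le.mpr (by exact_mod_cast h))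
  have ht0 : t ≠ 0 := by omega
  rw [coeff_add, finset_sum_coeff, coeff_C, if_neg ht0]
  simp only [coeff_C_mul_X_pow]
  rw [Finset.sum_ite_eq (Finset.range n) t (fun m => myC Q κ m), if_neg (by simpa using htn)]
  ring

private lemma natDegree_myP (n Q : ℕ) (hn : 1 ≤ n) (κ : ℕ → ℤ) (b : ℝ) (j : ℤ) :
    (myP n Q κ b j).natDegree = n := by
  have h2 : (myP n Q κ b j).coeff n = 1 := by
    rw [coeff_myP, if_pos rfl, if_neg (lt_irrefl _), if_neg (by omega)]; ring
  have hle : (myP n Q κ b j).natDegree ≤ n := by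
    apply natDegree_le_iff_coeff_eq_zero.mpr
    intro t ht
    rw [coeff_myP, if_neg (by omega), if_neg (by omega), if_neg (by omega)]; ring
  have hge : n ≤ (myP n Q κ b j).natDegree := le_natDegree_of_ne_zero (by rw [h2]; norm_num)
  omega

private lemma irred_myP (n Q : ℕ) (hn : 2 ≤ n) (κ : ℕ → ℤ) (b : ℝ) (j : ℤ) :
    Irreducible ((myP n Q κ b j).map (algebraMap ℤ ℚ)) := by
  have hmon := monic_myP n Q (by omega) κ b j
  rw [← Monic.irreducible_iff_irreducible_map_fraction_map hmon]
  have hB : ∃ c, myB n Q κ b = 4 * c + 2 := ⟨_, rfl⟩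
  obtain ⟨c, hc⟩ := hB
  apply Polynomial.IsEisensteinAt.irreducible
    (𝓟 := Ideal.span {(2:ℤ)}) ?_ ?_ hmon.isPrimitive ?_
  · constructor
    · rw [hmon.leadingCoeff, Ideal.mem_span_singleton]
      norm_num
    · intro t ht
      rw [natDegree_myP n Q (by omega) κ b j] at ht
      rw [coeff_myP, Ideal.mem_span_singleton, if_neg (by omega), if_pos ht]
      rcases Nat.eq_zero_or_pos t with rfl | ht1
      · simp only [myC, if_pos rfl]
        omega
      · rw [if_neg (by omega)]
        simp only [myC, if_neg (by omega : t ≠ 0), myA]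
        rcases eq_or_ne t 1 with rfl | h1 <;> simp_all <;> omega
    · rw [coeff_myP, if_neg (by omega), if_pos (by omega), if_pos rfl]
      simp only [myC, if_pos rfl]
      rw [Ideal.span_singleton_pow, Ideal.mem_span_singleton]
      norm_num
      omega
  · exact (Ideal.span_singleton_prime (by norm_num)).mpr Int.prime_two
  · rw [natDegree_myP n Q (by omega) κ b j]; omega

private lemma abs_pow_sub_pow (x y : ℝ) (hx : |x| ≤ 1/2) (hy : |y| ≤ 1/2) (m : ℕ) :
    |y ^ m - x ^ m| ≤ |y - x| := by
  rcases Nat.eq_zero_or_pos m with rfl | hm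
  · simp
  rw [← geom_sum₂_mul y x m, abs_mul]
  have h1 : |∑ i ∈ Finset.range m, y ^ i * x ^ (m - 1 - i)| ≤ m * (1/2) ^ (m-1) := by
    calc |∑ i ∈ Finset.range m, y ^ i * x ^ (m - 1 - i)|
        ≤ ∑ i ∈ Finset.range m, |y ^ i * x ^ (m - 1 - i)| := Finset.abs_sum_le_sum_abs _ _
      _ ≤ ∑ _i ∈ Finset.range m, (1/2:ℝ) ^ (m-1) := by
          apply Finset.sum_le_sum
          intro i hi
          rw [abs_mul, abs_pow, abs_pow]
          calc |y|^i * |x|^(m-1-i)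
              ≤ (1/2:ℝ)^i * (1/2:ℝ)^(m-1-i) := by
                apply mul_le_mul (pow_le_pow_left₀ (abs_nonneg _) hy i)
                  (pow_le_pow_left₀ (abs_nonneg _) hx _) (by positivity) (by positivity)
            _ = (1/2:ℝ)^(m-1) := by
                rw [← pow_add]; congr 1
                have : i < m := Finset.mem_range.mp hi
                omega
      _ = m * (1/2:ℝ)^(m-1) := by rw [Finset.sum_const, Finset.card_range, nsmul_eq_mul]
  have hm2 : (m:ℝ) ≤ 2^(m-1) := by
    have h := Nat.lt_two_pow_self (n := m-1)
    have : m ≤ 2^(m-1) := by omega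
    exact_mod_cast this
  have h2 : (m:ℝ) * (1/2) ^ (m-1) ≤ 1 := by
    calc (m:ℝ) * (1/2)^(m-1) ≤ 2^(m-1) * (1/2)^(m-1) :=
          mul_le_mul_of_nonneg_right hm2 (by positivity)
      _ = 1 := by rw [← mul_pow]; norm_num
  calc |∑ i ∈ Finset.range m, y ^ i * x ^ (m - 1 - i)| * |y - x|
      ≤ 1 * |y - x| := mul_le_mul_of_nonneg_right (h1.trans h2) (abs_nonneg _)
    _ = |y - x| := one_mul _

private lemma myA_bounds (Q : ℕ) : (Q : ℤ) ≤ 2 * myA Q ∧ 2 * myA Q ≤ (Q : ℤ) + 8 := by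
  have := Int.mul_ediv_add_emod (Q : ℤ) 4
  have h2 : 0 ≤ (Q:ℤ) % 4 := Int.emod_nonneg _ (by norm_num)
  have h3 : (Q:ℤ) % 4 < 4 := Int.emod_lt_of_pos _ (by norm_num)
  unfold myA
  omega

private lemma myC_bounds (Q : ℕ) (κ : ℕ → ℤ) (K : ℤ) (hK : 0 ≤ K)
    (hκ : ∀ i, 0 ≤ κ i ∧ κ i ≤ K) (m : ℕ) :
    (if m = 1 then myA Q else 0) ≤ myC Q κ m ∧
      myC Q κ m ≤ (if m = 1 then myA Q else 0) + 2 * K := by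
  have hA : 0 ≤ myA Q := by have := myA_bounds Q; omega
  unfold myC
  rcases eq_or_ne m 0 with rfl | h0
  · simp; omega
  · rw [if_neg h0]
    have := hκ (m - 1)
    rcases eq_or_ne m 1 with rfl | h1 <;> simp_all <;> omega

private lemma myF_abs_le (n Q : ℕ) (hn : 2 ≤ n) (κ : ℕ → ℤ) (K : ℤ) (hK : 0 ≤ K)
    (hκ : ∀ i, 0 ≤ κ i ∧ κ i ≤ K) (x : ℝ) (hx : |x| ≤ 1/2) :
    |myF n Q κ x| ≤ 1 + ((myA Q : ℝ) / 2 + K * n) := by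
  unfold myF
  have h1 : |x ^ n| ≤ 1 := by
    rw [abs_pow]; exact pow_le_one₀ (abs_nonneg _) (le_trans hx (by norm_num))
  have hterm : ∀ m ∈ Finset.range n,
      |(myC Q κ m : ℝ) * x ^ m| ≤ (if m = 1 then (myA Q : ℝ) else 0) / 2 + K := by
    intro m _
    have hC := myC_bounds Q κ K hK hκ m
    have hA : (0:ℤ) ≤ myA Q := by have := myA_bounds Q; omega
    rcases eq_or_ne m 0 with rfl | h0
    · simp only [myC, if_pos rfl]
      simp
      positivity
    · have hxm : |x| ^ m ≤ 1/2 := by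
        calc |x| ^ m ≤ (1/2:ℝ) ^ m := pow_le_pow_left₀ (abs_nonneg _) hx m
          _ ≤ (1/2:ℝ) ^ 1 := pow_le_pow_of_le_one (by norm_num) (by norm_num) (by omega)
          _ = 1/2 := pow_one _
      have hCnn : (0:ℤ) ≤ myC Q κ m := le_trans (by split_ifs <;> simp [hA]) hC.1
      have hCub : (myC Q κ m : ℝ) ≤ (if m = 1 then (myA Q : ℝ) else 0) + 2 * K := by
        have := hC.2; split_ifs with h <;> simp [h] at this ⊢ <;> exact_mod_cast this
      rw [abs_mul, abs_pow]
      have habs : |(myC Q κ m : ℝ)| = (myC Q κ m : ℝ) := abs_of_nonneg (by exact_mod_cast hCnn)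
      rw [habs]
      calc (myC Q κ m : ℝ) * |x| ^ m
          ≤ ((if m = 1 then (myA Q : ℝ) else 0) + 2 * K) * (1/2) := by
            apply mul_le_mul hCub hxm (by positivity)
            split_ifs <;> positivity
        _ = (if m = 1 then (myA Q : ℝ) else 0) / 2 + K := by ring
  have h2 : |∑ m ∈ Finset.range n, (myC Q κ m : ℝ) * x ^ m| ≤ (myA Q : ℝ) / 2 + K * n := by
    calc |∑ m ∈ Finset.range n, (myC Q κ m : ℝ) * x ^ m|
        ≤ ∑ m ∈ Finset.range n, |(myC Q κ m : ℝ) * x ^ m| := Finset.abs_sum_le_sum_abs _ _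
      _ ≤ ∑ m ∈ Finset.range n, ((if m = 1 then (myA Q : ℝ) else 0) / 2 + K) :=
          Finset.sum_le_sum hterm
      _ = (myA Q : ℝ) / 2 + K * n := by
          rw [Finset.sum_add_distrib, Finset.sum_const, Finset.card_range, nsmul_eq_mul]
          rw [← Finset.sum_div, Finset.sum_ite_eq' (Finset.range n) 1 (fun _ => (myA Q : ℝ)),
            if_pos (Finset.mem_range.mpr (by omega))]
          ring
  calc |x ^ n + ∑ m ∈ Finset.range n, (myC Q κ m : ℝ) * x ^ m|
      ≤ |x ^ n| + |∑ m ∈ Finset.range n, (myC Q κ m : ℝ) * x ^ m| := abs_add_le _ _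
    _ ≤ 1 + ((myA Q : ℝ) / 2 + K * n) := add_le_add h1 h2

private lemma myF_growth (n Q : ℕ) (hn : 2 ≤ n) (κ : ℕ → ℤ) (K : ℤ) (hK : 0 ≤ K)
    (hκ : ∀ i, 0 ≤ κ i ∧ κ i ≤ K) (a b : ℝ) (ha : |a| ≤ 1/2) (hb : |b| ≤ 1/2)
    (hab : a ≤ b) :
    ((myA Q : ℝ) - 2 * K * n - 1) * (b - a) ≤ myF n Q κ b - myF n Q κ a := by
  have hA : (0:ℤ) ≤ myA Q := by have := myA_bounds Q; omega
  have hpow : |b ^ n - a ^ n| ≤ b - a :=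
    (abs_pow_sub_pow a b ha hb n).trans_eq (abs_of_nonneg (by linarith))
  have hterm : ∀ m ∈ Finset.range n,
      (if m = 1 then (myA Q : ℝ) else 0) * (b - a) - 2 * K * (b - a)
        ≤ (myC Q κ m : ℝ) * b ^ m - (myC Q κ m : ℝ) * a ^ m := by
    intro m _
    have hC := myC_bounds Q κ K hK hκ m
    have habs : |b ^ m - a ^ m| ≤ b - a :=
      (abs_pow_sub_pow a b ha hb m).trans_eq (abs_of_nonneg (by linarith))
    have hCnn : (0:ℤ) ≤ myC Q κ m := le_trans (by split_ifs <;> simp [hA]) hC.1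
    rcases eq_or_ne m 1 with rfl | h1
    · rw [if_pos rfl, pow_one, pow_one]
      have h1' : (myA Q : ℝ) ≤ (myC Q κ 1 : ℝ) := by
        have := hC.1; rw [if_pos rfl] at this; exact_mod_cast this
      have hKr : (0:ℝ) ≤ K := by exact_mod_cast hK
      nlinarith
    · rw [if_neg h1]
      have hub : (myC Q κ m : ℝ) ≤ 2 * K := by
        have h := hC.2; rw [if_neg h1] at h
        have h2 : myC Q κ m ≤ 2 * K := by omega
        exact_mod_cast h2
      have hCnn' : (0:ℝ) ≤ (myC Q κ m : ℝ) := by exact_mod_cast hCnn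
      have := neg_abs_le ((myC Q κ m : ℝ) * (b ^ m - a ^ m))
      rw [abs_mul, abs_of_nonneg hCnn'] at this
      have h2 : (myC Q κ m : ℝ) * |b ^ m - a ^ m| ≤ 2 * K * (b - a) := by
        apply mul_le_mul hub habs (abs_nonneg _) (by positivity)
      nlinarith [abs_nonneg (b ^ m - a ^ m)]
  have hsum := Finset.sum_le_sum hterm
  rw [Finset.sum_sub_distrib, Finset.sum_const, Finset.card_range, nsmul_eq_mul,
    ← Finset.sum_mul, Finset.sum_ite_eq' (Finset.range n) 1 (fun _ => (myA Q : ℝ)),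
    if_pos (Finset.mem_range.mpr (by omega))] at hsum
  have hre : myF n Q κ b - myF n Q κ a = (b ^ n - a ^ n)
      + ∑ m ∈ Finset.range n, ((myC Q κ m : ℝ) * b ^ m - (myC Q κ m : ℝ) * a ^ m) := by
    unfold myF
    rw [Finset.sum_sub_distrib]
    ring
  have hlow : -(b - a) ≤ b ^ n - a ^ n := by
    have := neg_abs_le (b ^ n - a ^ n); linarith
  rw [hre]
  nlinarith [hsum]

set_option maxHeartbeats 2000000 in
/-- For every `n ≥ 2` there are constants `c₃, c₄ > 0` and `Q₀` such that for every
integer `Q > Q₀`, every interval `I = [a,b] ⊆ [-1/2, 1/2]` of length at least `c₃·Q⁻¹`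
contains at least `c₄·Qⁿ·|I|` real algebraic integers of degree `n` and height at most `Q`. -/
theorem algebraic_integers_in_short_intervals (n : ℕ) (hn : 2 ≤ n) :
    ∃ c₃ > (0 : ℝ), ∃ c₄ > (0 : ℝ), ∃ Q₀ : ℕ, ∀ Q : ℕ, Q₀ < Q →
      ∀ a b : ℝ, Set.Icc a b ⊆ Set.Icc (-(1/2) : ℝ) (1/2) →
        c₃ / (Q : ℝ) ≤ b - a →
        ∃ S : Finset ℝ,
          (∀ α ∈ S, α ∈ Set.Icc a b ∧ IsRealAlgIntOfHt n (Q : ℤ) α) ∧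
          c₄ * (Q : ℝ) ^ n * (b - a) ≤ (S.card : ℝ) := by
  classical
  have hnR : (2:ℝ) ≤ (n:ℝ) := by exact_mod_cast hn
  refine ⟨64, by norm_num, (1/(32*(n:ℝ)))^n, by positivity, 100, ?_⟩
  intro Q hQ a b hsub hlen
  have hQR : (100:ℝ) < (Q:ℝ) := by exact_mod_cast hQ
  have hQpos : (0:ℝ) < Q := by linarith
  have hQb : 64 ≤ (Q:ℝ) * (b - a) := by
    rw [div_le_iff₀ hQpos] at hlen; linarith
  have hba : 0 < b - a := by nlinarith
  have hab : a ≤ b := by linarith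
  have hmema : a ∈ Set.Icc (-(1/2):ℝ) (1/2) := hsub ⟨le_refl a, hab⟩
  have hmemb : b ∈ Set.Icc (-(1/2):ℝ) (1/2) := hsub ⟨hab, le_refl b⟩
  have ha2 : |a| ≤ 1/2 := abs_le.mpr ⟨by linarith [hmema.1], hmema.2⟩
  have hb2 : |b| ≤ 1/2 := abs_le.mpr ⟨by linarith [hmemb.1], hmemb.2⟩
  have hba1 : b - a ≤ 1 := by
    have h1 := hmema.1
    have h2 := hmemb.2
    linarith
  have hQba1 : (Q:ℝ) * (b - a) ≤ (Q:ℝ) := by nlinarith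
  -- constants
  set K : ℤ := ((Q / (32*n) : ℕ) : ℤ) with hKdef
  have hK : 0 ≤ K := Int.natCast_nonneg _
  have hKr0 : (0:ℝ) ≤ (K:ℝ) := by exact_mod_cast hK
  have h32R : (0:ℝ) < 32*(n:ℝ) := by linarith
  have hKR : (K:ℝ) ≤ (Q:ℝ)/(32*(n:ℝ)) := by
    rw [hKdef]
    push_cast
    calc ((Q/(32*n):ℕ):ℝ) ≤ (Q:ℝ)/(((32*n : ℕ)):ℝ) := Nat.cast_div_le
      _ = (Q:ℝ)/(32*(n:ℝ)) := by push_cast; ring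
  have hK1 : (Q:ℝ)/(32*(n:ℝ)) ≤ (K:ℝ) + 1 := by
    have h32 : 0 < 32 * n := by omega
    have hdm := Nat.div_add_mod Q (32*n)
    have hm := Nat.mod_lt Q h32
    have hlt : Q < 32*n*(Q/(32*n)) + 32*n := by omega
    have hltR : (Q:ℝ) < 32*(n:ℝ)*(K:ℝ) + 32*(n:ℝ) := by
      rw [hKdef]; push_cast; exact_mod_cast hlt
    rw [div_le_iff₀ h32R]
    nlinarith
  set J : ℤ := ⌊(Q:ℝ) * (b - a) / 32⌋ with hJdef
  have hJR : (J:ℝ) ≤ (Q:ℝ)*(b-a)/32 := Int.floor_le _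
  have hJ1 : (Q:ℝ)*(b-a)/32 ≤ (J:ℝ) + 1 := le_of_lt (Int.lt_floor_add_one _)
  have hJ0 : 0 ≤ J := by
    rw [hJdef]; apply Int.floor_nonneg.mpr; linarith
  have hAb := myA_bounds Q
  have hA1 : (Q:ℝ) ≤ 2*(myA Q : ℝ) := by exact_mod_cast hAb.1
  have hA2 : 2*(myA Q:ℝ) ≤ (Q:ℝ) + 8 := by exact_mod_cast hAb.2
  have hKn : (K:ℝ) * n ≤ (Q:ℝ)/32 := by
    calc (K:ℝ)*n ≤ ((Q:ℝ)/(32*(n:ℝ)))*n := mul_le_mul_of_nonneg_right hKR (by linarith)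
      _ = (Q:ℝ)/32 := by field_simp
  -- parameter set
  set T : Finset ((Fin (n-1) → ℤ) × ℤ) :=
    (Fintype.piFinset fun _ : Fin (n-1) => Finset.Icc (0:ℤ) K) ×ˢ Finset.Icc (0:ℤ) J with hTdef
  have hκmem : ∀ p ∈ T, ∀ i, 0 ≤ κof n p.1 i ∧ κof n p.1 i ≤ K := by
    intro p hp i
    rw [hTdef, Finset.mem_product] at hp
    have h1 := Fintype.mem_piFinset.mp hp.1
    unfold κof
    split
    · next h => exact Finset.mem_Icc.mp (h1 ⟨i, h⟩)
    · exact ⟨le_refl 0, hK⟩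
  have hjmem : ∀ p ∈ T, 0 ≤ p.2 ∧ p.2 ≤ J := by
    intro p hp; rw [hTdef, Finset.mem_product] at hp; exact Finset.mem_Icc.mp hp.2
  -- growth
  have hgrow : ∀ p ∈ T, ((Q:ℝ)/4) * (b - a) ≤ myF n Q (κof n p.1) b - myF n Q (κof n p.1) a := by
    intro p hp
    refine le_trans ?_ (myF_growth n Q hn (κof n p.1) K hK (hκmem p hp) a b ha2 hb2 hab)
    apply mul_le_mul_of_nonneg_right _ (le_of_lt hba)
    linarith
  have hFb : ∀ p ∈ T, |myF n Q (κof n p.1) b| ≤ 1 + ((myA Q:ℝ)/2 + K*n) :=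
    fun p hp => myF_abs_le n Q hn _ K hK (hκmem p hp) b hb2
  have hBl : ∀ k : ℕ → ℤ, -(myF n Q k b) ≤ (myB n Q k b : ℝ) := by
    intro k
    have := Int.le_ceil ((-(myF n Q k b) - 2)/4)
    unfold myB; push_cast; linarith
  have hBu : ∀ k : ℕ → ℤ, (myB n Q k b : ℝ) ≤ -(myF n Q k b) + 4 := by
    intro k
    have := Int.ceil_lt_add_one ((-(myF n Q k b) - 2)/4)
    unfold myB; push_cast; linarith
  -- roots via IVT
  have hroot : ∀ p : ((Fin (n-1) → ℤ) × ℤ), p ∈ T →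
      ∃ α ∈ Set.Icc a b, aeval α (myP n Q (κof n p.1) b p.2) = 0 := by
    intro p hp
    have hj := hjmem p hp
    have hj2 : (0:ℝ) ≤ (p.2:ℝ) ∧ (p.2:ℝ) ≤ (J:ℝ) := ⟨by exact_mod_cast hj.1, by exact_mod_cast hj.2⟩
    have hga : aeval a (myP n Q (κof n p.1) b p.2) ≤ 0 := by
      rw [aeval_myP]
      have hg := hgrow p hp
      have hbu := hBu (κof n p.1)
      nlinarith [hj2.1, hj2.2, hJR, hQb]
    have hgb : 0 ≤ aeval b (myP n Q (κof n p.1) b p.2) := by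
      rw [aeval_myP]
      have hbl := hBl (κof n p.1)
      linarith [hj2.1]
    have hivt := intermediate_value_Icc hab
      (Continuous.continuousOn (Polynomial.continuous_aeval (myP n Q (κof n p.1) b p.2)))
    obtain ⟨α, hmem, heq⟩ := hivt ⟨hga, hgb⟩
    exact ⟨α, hmem, heq⟩
  -- height bounds
  have hcoeff : ∀ p ∈ T, ∀ t, |(myP n Q (κof n p.1) b p.2).coeff t| ≤ (Q:ℤ) := by
    intro p hp t
    have hκ := hκmem p hp
    have hj := hjmem p hp
    have hQZ : (1:ℤ) ≤ (Q:ℤ) := by exact_mod_cast (by omega : 1 ≤ Q)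
    rcases lt_trichotomy t n with htn | rfl | htn
    · rw [coeff_myP, if_neg (by omega), if_pos htn]
      rcases eq_or_ne t 0 with rfl | ht0
      · rw [if_pos rfl]
        simp only [myC, if_pos rfl, zero_add]
        have hFbb := abs_le.mp (hFb p hp)
        have hbl := hBl (κof n p.1)
        have hbu := hBu (κof n p.1)
        have hj2 : (0:ℝ) ≤ (p.2:ℝ) ∧ (p.2:ℝ) ≤ (J:ℝ) :=
          ⟨by exact_mod_cast hj.1, by exact_mod_cast hj.2⟩
        have h1 : ((myB n Q (κof n p.1) b + 4*p.2 : ℤ):ℝ) ≤ (Q:ℝ) := by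
          push_cast
          linarith [hFbb.1, hFbb.2, hJR, hKn]
        have h2 : (-(Q:ℝ)) ≤ ((myB n Q (κof n p.1) b + 4*p.2 : ℤ):ℝ) := by
          push_cast
          linarith [hFbb.1, hFbb.2, hKn]
        have habs : |myB n Q (κof n p.1) b + 4*p.2| ≤ (Q:ℤ) := by
          rw [abs_le]
          constructor
          · exact_mod_cast h2
          · exact_mod_cast h1
        simpa using habs
      · rw [if_neg ht0]
        have hC := myC_bounds Q (κof n p.1) K hK hκ t
        have hA : (0:ℤ) ≤ myA Q := by omega
        have hCnn : (0:ℤ) ≤ myC Q (κof n p.1) t := le_trans (by split_ifs <;> simp [hA]) hC.1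
        have hCub : myC Q (κof n p.1) t ≤ myA Q + 2*K := by
          have := hC.2; split_ifs at this <;> omega
        have hup : (myC Q (κof n p.1) t : ℝ) ≤ (Q:ℝ) := by
          have h2K : 2*(K:ℝ) ≤ (K:ℝ)*n := by nlinarith
          have : (myC Q (κof n p.1) t : ℝ) ≤ (myA Q : ℝ) + 2*(K:ℝ) := by exact_mod_cast hCub
          linarith [hKn]
        have habs : |myC Q (κof n p.1) t| ≤ (Q:ℤ) := by
          rw [abs_le]
          constructor
          · omega
          · exact_mod_cast hup
        simpa using habs
    · rw [coeff_myP, if_pos rfl, if_neg (lt_irrefl _), if_neg (by omega)]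
      simpa using hQZ
    · rw [coeff_myP, if_neg (by omega), if_neg (by omega), if_neg (by omega)]
      simpa using hQZ.trans' (by norm_num)
  -- the set of roots
  have hroot' : ∀ p : {x // x ∈ T},
      ∃ α ∈ Set.Icc a b, aeval α (myP n Q (κof n p.1.1) b p.1.2) = 0 :=
    fun p => hroot p.1 p.2
  set Φ : {x // x ∈ T} → ℝ := fun p => Classical.choose (hroot' p) with hΦdef
  have hΦspec : ∀ p, Φ p ∈ Set.Icc a b ∧ aeval (Φ p) (myP n Q (κof n p.1.1) b p.1.2) = 0 := by
    intro p
    obtain ⟨h1, h2⟩ := Classical.choose_spec (hroot' p)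
    exact ⟨h1, h2⟩
  have hinj : Function.Injective Φ := by
    intro p q hpq
    have h1 := hΦspec p
    have h2 := hΦspec q
    rw [← hpq] at h2
    have hmapeq : (myP n Q (κof n p.1.1) b p.1.2).map (algebraMap ℤ ℚ)
        = (myP n Q (κof n q.1.1) b q.1.2).map (algebraMap ℤ ℚ) := by
      have ha1 : aeval (Φ p) ((myP n Q (κof n p.1.1) b p.1.2).map (algebraMap ℤ ℚ)) = 0 := by
        rw [aeval_map_algebraMap]; exact h1.2
      have ha2 : aeval (Φ p) ((myP n Q (κof n q.1.1) b q.1.2).map (algebraMap ℤ ℚ)) = 0 := by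
        rw [aeval_map_algebraMap]; exact h2.2
      have e1 := minpoly.eq_of_irreducible_of_monic (irred_myP n Q hn (κof n p.1.1) b p.1.2)
        ha1 ((monic_myP n Q (by omega) (κof n p.1.1) b p.1.2).map _)
      have e2 := minpoly.eq_of_irreducible_of_monic (irred_myP n Q hn (κof n q.1.1) b q.1.2)
        ha2 ((monic_myP n Q (by omega) (κof n q.1.1) b q.1.2).map _)
      rw [e1, e2]
    have hPeq : myP n Q (κof n p.1.1) b p.1.2 = myP n Q (κof n q.1.1) b q.1.2 :=
      Polynomial.map_injective _ (RingHom.injective_int (algebraMap ℤ ℚ)) hmapeq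
    have hcoe : ∀ t, (myP n Q (κof n p.1.1) b p.1.2).coeff t
        = (myP n Q (κof n q.1.1) b q.1.2).coeff t := fun t => by rw [hPeq]
    have hkeq : p.1.1 = q.1.1 := by
      funext i
      have hct := hcoe ((i:ℕ) + 1)
      rw [coeff_myP, coeff_myP] at hct
      have hi1 : (i:ℕ) + 1 < n := by have := i.2; omega
      simp only [if_neg (show ¬((i:ℕ)+1 = n) by omega), if_pos hi1,
        if_neg (show ¬((i:ℕ)+1 = 0) by omega), zero_add, add_zero] at hct
      simp only [myC, if_neg (show ¬((i:ℕ)+1 = 0) by omega), Nat.add_sub_cancel] at hct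
      have hκeq : κof n p.1.1 (i:ℕ) = κof n q.1.1 (i:ℕ) := by
        split_ifs at hct <;> omega
      unfold κof at hκeq
      rw [dif_pos i.2, dif_pos i.2] at hκeq
      simpa using hκeq
    have hjeq : p.1.2 = q.1.2 := by
      have hct := hcoe 0
      rw [coeff_myP, coeff_myP, hkeq] at hct
      have h0n : ¬((0:ℕ) = n) := by omega
      have h0lt : 0 < n := by omega
      rw [if_neg h0n, if_pos h0lt, if_pos rfl] at hct
      simp only [myC, if_pos rfl, if_true, zero_add, add_right_inj] at hct
      exact mul_left_cancel₀ (by norm_num : (4:ℤ) ≠ 0) hct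
    exact Subtype.ext (Prod.ext hkeq hjeq)
  refine ⟨Finset.image Φ T.attach, ?_, ?_⟩
  · intro α hα
    obtain ⟨p, _, hp⟩ := Finset.mem_image.mp hα
    subst hp
    exact ⟨(hΦspec p).1, ⟨myP n Q (κof n p.1.1) b p.1.2,
      monic_myP n Q (by omega) _ b _, natDegree_myP n Q (by omega) _ b _,
      irred_myP n Q hn _ b _, hcoeff p.1 p.2, (hΦspec p).2⟩⟩
  · have hScard : (Finset.image Φ T.attach).card = T.card := by
      rw [Finset.card_image_of_injective _ hinj, Finset.card_attach]
    rw [hScard]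
    have hTcard : T.card = ((K+1).toNat)^(n-1) * (J+1).toNat := by
      rw [hTdef, Finset.card_product, Fintype.card_piFinset]
      simp [Int.card_Icc]
    rw [hTcard]
    have hK1' : ((K+1).toNat : ℝ) = (K:ℝ)+1 := by
      have h : ((K+1).toNat : ℤ) = K+1 := Int.toNat_of_nonneg (by omega)
      exact_mod_cast h
    have hJ1' : ((J+1).toNat : ℝ) = (J:ℝ)+1 := by
      have h : ((J+1).toNat : ℤ) = J+1 := Int.toNat_of_nonneg (by omega)
      exact_mod_cast h
    push_cast [hK1', hJ1']
    have hr0 : (0:ℝ) < (Q:ℝ)/(32*(n:ℝ)) := div_pos hQpos h32R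
    have hstep1 : ((Q:ℝ)/(32*(n:ℝ)))^(n-1) ≤ ((K:ℝ)+1)^(n-1) :=
      pow_le_pow_left₀ hr0.le hK1 _
    have hstep2 : ((Q:ℝ)/(32*(n:ℝ))) * (b-a) ≤ (J:ℝ)+1 := by
      have hr32 : (Q:ℝ)/(32*(n:ℝ)) ≤ (Q:ℝ)/32 := by
        apply div_le_div_of_nonneg_left hQpos.le (by norm_num)
        linarith
      calc ((Q:ℝ)/(32*(n:ℝ)))*(b-a) ≤ ((Q:ℝ)/32)*(b-a) :=
            mul_le_mul_of_nonneg_right hr32 (le_of_lt hba)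
        _ = (Q:ℝ)*(b-a)/32 := by ring
        _ ≤ (J:ℝ)+1 := hJ1
    have hc4 : (1/(32*(n:ℝ)))^n * (Q:ℝ)^n * (b-a)
        = ((Q:ℝ)/(32*(n:ℝ)))^(n-1) * (((Q:ℝ)/(32*(n:ℝ)))*(b-a)) := by
      rw [← mul_pow]
      have h1 : (1/(32*(n:ℝ))) * Q = (Q:ℝ)/(32*(n:ℝ)) := by ring
      rw [h1, ← mul_assoc, ← pow_succ]
      have hnn : n - 1 + 1 = n := by omega
      rw [hnn]
    rw [hc4]
    exact mul_le_mul hstep1 hstep2 (mul_nonneg hr0.le hba.le)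
      (pow_nonneg (by linarith) _)
end

section
/- Let P be a polynomial of degree n ≥ 1 with complex roots α₁, α₂, …, αₙ (listed with multiplicity), and let x ∈ ℝ be a point with P'(x) ≠ 0. If α₁ is a root nearest to x, i.e., |x - α₁| = min over 1 ≤ i ≤ n of |x - αᵢ|, then |x - α₁| ≤ n·|P(x)|·|P'(x)|^{-1}. -/
open Polynomial

private lemma deriv_fin_prod {ι : Type*} [DecidableEq ι] (s : Finset ι) (f : ι → Polynomial ℂ) :
    Polynomial.derivative (∏ i ∈ s, f i)
      = ∑ i ∈ s, (∏ j ∈ s.erase i, f j) * Polynomial.derivative (f i) := by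
  simp only [Finset.prod, Finset.sum, Polynomial.derivative_prod, Finset.erase_val]

/-- If `P` is a polynomial of degree `n ≥ 1` with roots `α 0, …, α (n-1)` (with
multiplicity), `x` is a real point with `P'(x) ≠ 0`, and `α 0` is a root nearest to `x`,
then `|x - α 0| ≤ n·|P(x)|/|P'(x)|`. -/
theorem dist_to_nearest_root_le (n : ℕ) (hn : 1 ≤ n) (P : Polynomial ℂ)
    (hP : P.natDegree = n) (α : Fin n → ℂ)
    (hroots : P = C P.leadingCoeff * ∏ i, (X - C (α i)))
    (x : ℝ) (hderiv : P.derivative.eval (x : ℂ) ≠ 0)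
    (hmin : ∀ i, ‖(x : ℂ) - α ⟨0, hn⟩‖ ≤ ‖(x : ℂ) - α i‖) :
    ‖(x : ℂ) - α ⟨0, hn⟩‖ ≤
      (n : ℝ) * ‖P.eval (x : ℂ)‖ / ‖P.derivative.eval (x : ℂ)‖ := by
  set c := P.leadingCoeff with hc
  set d := ‖(x : ℂ) - α ⟨0, hn⟩‖ with hd
  set A := ‖P.eval (x : ℂ)‖ with hA
  set B := ‖P.derivative.eval (x : ℂ)‖ with hB
  have hBpos : 0 < B := by
    simpa [hB] using (norm_pos_iff.2 hderiv)
  -- derivative formula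
  have hQ : P.derivative = C c * ∑ i, ∏ j ∈ Finset.univ.erase i, (X - C (α j)) := by
    conv_lhs => rw [hroots]
    rw [derivative_C_mul, deriv_fin_prod]
    simp
  have hderiv_eval : P.derivative.eval (x : ℂ)
      = c * ∑ i, ∏ j ∈ Finset.univ.erase i, ((x : ℂ) - α j) := by
    rw [hQ]; simp [eval_finset_sum, eval_prod]
  have heval : P.eval (x : ℂ) = c * ∏ j, ((x : ℂ) - α j) := by
    rw [hroots]; simp [eval_prod]
  by_cases hPx : P.eval (x : ℂ) = 0
  · -- some root equals x, so d = 0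
    have hc0 : c ≠ 0 := by
      intro h
      apply hderiv
      rw [hderiv_eval, h, zero_mul]
    rw [heval] at hPx
    have : ∃ j, (x : ℂ) - α j = 0 := by
      rcases mul_eq_zero.1 hPx with h | h
      · exact absurd h hc0
      · exact Finset.prod_eq_zero_iff.1 h |>.imp fun j hj => hj.2
    obtain ⟨j, hj⟩ := this
    have hd0 : d = 0 := le_antisymm (by simpa [hj] using hmin j) (norm_nonneg _)
    rw [hd0]
    positivity
  · have hne : ∀ i, (x : ℂ) - α i ≠ 0 := by
      intro i h
      apply hPx
      rw [heval]
      exact mul_eq_zero_of_right _ (Finset.prod_eq_zero (Finset.mem_univ i) h)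
    have hdpos : 0 < d := (norm_pos_iff.2 (hne ⟨0, hn⟩))
    -- key: each term |c * ∏_{j≠i}(x-αⱼ)| = A / |x-αᵢ| ≤ A / d
    have hterm : ∀ i : Fin n,
        ‖c‖ * ∏ j ∈ Finset.univ.erase i, ‖(x : ℂ) - α j‖ ≤ A / d := by
      intro i
      have hprod : (∏ j ∈ Finset.univ.erase i, ((x : ℂ) - α j)) * ((x : ℂ) - α i)
          = ∏ j, ((x : ℂ) - α j) := Finset.prod_erase_mul _ _ (Finset.mem_univ i)
      have habs : ‖c‖ * (∏ j ∈ Finset.univ.erase i, ‖(x : ℂ) - α j‖)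
          * ‖(x : ℂ) - α i‖ = A := by
        rw [hA, heval, norm_mul, ← norm_prod, mul_assoc, ← norm_mul, hprod]
      have hipos : 0 < ‖(x : ℂ) - α i‖ := norm_pos_iff.2 (hne i)
      rw [← habs, mul_div_assoc]
      have h2 : 1 ≤ ‖(x : ℂ) - α i‖ / d := (one_le_div hdpos).2 (hmin i)
      have h3 : (0:ℝ) ≤ ‖c‖ * ∏ j ∈ Finset.univ.erase i, ‖(x : ℂ) - α j‖ :=
        mul_nonneg (norm_nonneg _) (Finset.prod_nonneg fun j _ => norm_nonneg _)
      exact le_mul_of_one_le_right h3 h2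
    -- bound B
    have hBle : B ≤ n * A / d := by
      rw [hB, hderiv_eval, norm_mul]
      calc ‖c‖ * ‖∑ i, ∏ j ∈ Finset.univ.erase i, ((x : ℂ) - α j)‖
          ≤ ‖c‖ * ∑ i, ∏ j ∈ Finset.univ.erase i, ‖(x : ℂ) - α j‖ := by
            apply mul_le_mul_of_nonneg_left _ (norm_nonneg _)
            refine le_trans (norm_sum_le _ _) ?_
            apply Finset.sum_le_sum
            intro i _
            rw [norm_prod]
        _ = ∑ i : Fin n, ‖c‖ * ∏ j ∈ Finset.univ.erase i, ‖(x : ℂ) - α j‖ := by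
            rw [Finset.mul_sum]
        _ ≤ ∑ _i : Fin n, A / d := Finset.sum_le_sum fun i _ => hterm i
        _ = n * A / d := by
            rw [Finset.sum_const, Finset.card_univ, Fintype.card_fin, nsmul_eq_mul, mul_div_assoc]
    rw [le_div_iff₀ hBpos]
    rw [le_div_iff₀ hdpos] at hBle
    linarith [hBle]
end

section
/- Let n ≥ 1, let P₁, …, Pₙ ∈ ℤ[t] be polynomials of degree at most n - 1, write Pᵢ(t) = a_{i,n-1}t^{n-1} + … + a_{i,1}t + a_{i,0}, and let A = (a_{i,j}) be the n × n matrix of their coefficients. Let p be a prime that does not divide det A, and let θ₁, …, θₙ ∈ ℝ. Then there exist integers t₁, …, tₙ with |θᵢ - tᵢ| ≤ 1 for all i such that the monic polynomial P(t) = tⁿ + p·(t₁P₁(t) + … + tₙPₙ(t)) is irreducible over ℚ. -/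
open Polynomial

lemma degree_C_mul_le' {a : ℤ} (q : ℤ[X]) : (C a * q).degree ≤ q.degree := by
  calc (C a * q).degree ≤ (C a).degree + q.degree := degree_mul_le _ _
    _ ≤ 0 + q.degree := add_le_add degree_C_le le_rfl
    _ = q.degree := zero_add _

/-- Let `P₁, …, Pₙ ∈ ℤ[t]` have degree at most `n - 1` and coefficient matrix
`A = (a_{i,j})`, let `p` be a prime not dividing `det A`, and let `θ₁, …, θₙ ∈ ℝ`.
Then there are integers `t₁, …, tₙ` with `|θᵢ - tᵢ| ≤ 1` such that
`tⁿ + p·(t₁P₁ + … + tₙPₙ)` is irreducible over `ℚ`. -/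
theorem exists_integer_shift_eisenstein_irreducible (n : ℕ) (hn : 1 ≤ n)
    (P : Fin n → ℤ[X]) (hdeg : ∀ i, (P i).natDegree ≤ n - 1)
    (p : ℕ) (hp : p.Prime)
    (hnd : ¬ ((p : ℤ) ∣ (Matrix.of fun i j : Fin n => (P i).coeff (j : ℕ)).det))
    (θ : Fin n → ℝ) :
    ∃ t : Fin n → ℤ, (∀ i, |θ i - (t i : ℝ)| ≤ 1) ∧
      Irreducible ((X ^ n + C (p : ℤ) * ∑ i, C (t i) * P i).map (algebraMap ℤ ℚ)) := by
  haveI : Fact p.Prime := ⟨hp⟩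
  have hpne : (p : ℤ) ≠ 0 := by exact_mod_cast hp.ne_zero
  -- there is a row whose constant coefficient is not divisible by p
  have h0 : ∃ i₀, ¬ (p : ℤ) ∣ (P i₀).coeff 0 := by
    by_contra h
    push_neg at h
    apply hnd
    rw [← ZMod.intCast_zmod_eq_zero_iff_dvd]
    have hmd := (Int.castRingHom (ZMod p)).map_det
      (Matrix.of fun i j : Fin n => (P i).coeff (j : ℕ))
    rw [show ((Matrix.of fun i j : Fin n => (P i).coeff (j : ℕ)).det : ZMod p)
        = (Int.castRingHom (ZMod p)) (Matrix.of fun i j : Fin n => (P i).coeff (j : ℕ)).det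
        from rfl, hmd]
    apply Matrix.det_eq_zero_of_column_eq_zero (⟨0, hn⟩ : Fin n)
    intro i
    simp only [RingHom.mapMatrix_apply, Matrix.map_apply, Matrix.of_apply]
    exact (ZMod.intCast_zmod_eq_zero_iff_dvd _ p).mpr (h i)
  obtain ⟨i₀, hi₀⟩ := h0
  -- choose integers
  set t₀ : Fin n → ℤ := fun i => ⌊θ i⌋ with ht₀
  set s : ℤ := ∑ i, t₀ i * (P i).coeff 0 with hs
  set t : Fin n → ℤ :=
    if (p : ℤ) ∣ s then Function.update t₀ i₀ (t₀ i₀ + 1) else t₀ with htdef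
  have hclose : ∀ i, |θ i - (t i : ℝ)| ≤ 1 := by
    intro i
    have h1 : (⌊θ i⌋ : ℝ) ≤ θ i := Int.floor_le _
    have h2 : θ i < (⌊θ i⌋ : ℝ) + 1 := Int.lt_floor_add_one _
    have : t i = ⌊θ i⌋ ∨ t i = ⌊θ i⌋ + 1 := by
      rw [htdef]
      split_ifs with h
      · rcases eq_or_ne i i₀ with rfl | hne
        · right; simp [ht₀]
        · left; simp [Function.update_of_ne hne, ht₀]
      · left; rfl
    rcases this with h | h <;> rw [h] <;> rw [abs_le] <;> push_cast <;>
      constructor <;> linarith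
  have hsum : ¬ (p : ℤ) ∣ ∑ i, t i * (P i).coeff 0 := by
    rw [htdef]
    split_ifs with h
    · have key : ∑ i, Function.update t₀ i₀ (t₀ i₀ + 1) i * (P i).coeff 0
          = s + (P i₀).coeff 0 := by
        have : ∀ i : Fin n, Function.update t₀ i₀ (t₀ i₀ + 1) i * (P i).coeff 0
            = t₀ i * (P i).coeff 0 + (if i = i₀ then (P i₀).coeff 0 else 0) := by
          intro i
          rcases eq_or_ne i i₀ with rfl | hne
          · simp; ring
          · simp [Function.update_of_ne hne, hne]
        rw [Finset.sum_congr rfl fun i _ => this i, Finset.sum_add_distrib,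
          Finset.sum_ite_eq' Finset.univ i₀ (fun _ => (P i₀).coeff 0)]
        simp [hs]
      rw [key]
      intro hdvd
      exact hi₀ ((dvd_add_right h).mp hdvd)
    · exact h
  refine ⟨t, hclose, ?_⟩
  -- the polynomial over ℤ
  set G : ℤ[X] := ∑ i, C (t i) * P i with hG
  have hnbot : (⊥ : WithBot ℕ) < (n : ℕ) := by
    exact lt_of_lt_of_le (WithBot.bot_lt_coe 0) (by exact_mod_cast Nat.zero_le n)
  have hGdeg : G.degree < n := by
    apply lt_of_le_of_lt (degree_sum_le _ _)
    rw [Finset.sup_lt_iff hnbot]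
    intro i _
    calc (C (t i) * P i).degree ≤ (P i).degree := degree_C_mul_le' _
      _ ≤ ((n : ℕ) - 1 : ℕ) := degree_le_natDegree.trans (by exact_mod_cast hdeg i)
      _ < n := by exact_mod_cast Nat.sub_lt (by omega) one_pos
  have hpGdeg : (C (p : ℤ) * G).degree < n := lt_of_le_of_lt (degree_C_mul_le' _) hGdeg
  set Q : ℤ[X] := X ^ n + C (p : ℤ) * G with hQ
  have hQmonic : Q.Monic := monic_X_pow_add hpGdeg
  have hQdeg : Q.degree = n := by
    rw [hQ, degree_add_eq_left_of_degree_lt (by rwa [degree_X_pow]), degree_X_pow]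
  have hQdegpos : 0 < Q.degree := by
    rw [hQdeg]
    exact_mod_cast Nat.pos_of_ne_zero (by omega)
  have hQcoeff : ∀ k : ℕ, (k : WithBot ℕ) < Q.degree → Q.coeff k = p * G.coeff k := by
    intro k hk
    have hkn : k < n := by rw [hQdeg] at hk; exact_mod_cast hk
    rw [hQ]
    simp [coeff_X_pow, Nat.ne_of_lt hkn]
  have hG0 : G.coeff 0 = ∑ i, t i * (P i).coeff 0 := by
    rw [hG, finset_sum_coeff]
    exact Finset.sum_congr rfl fun i _ => by rw [coeff_C_mul]
  -- Eisenstein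
  have hPprime : (Ideal.span {(p : ℤ)}).IsPrime :=
    (Ideal.span_singleton_prime hpne).mpr (Nat.prime_iff_prime_int.mp hp)
  have hirr : Irreducible Q := by
    apply irreducible_of_eisenstein_criterion hPprime
    · rw [hQmonic.leadingCoeff]
      intro h1
      exact hPprime.ne_top ((Ideal.eq_top_iff_one _).mpr h1)
    · intro k hk
      rw [Ideal.mem_span_singleton, hQcoeff k hk]
      exact Dvd.intro _ rfl
    · exact hQdegpos
    · rw [Ideal.span_singleton_pow, Ideal.mem_span_singleton]
      have h0n : ((0 : ℕ) : WithBot ℕ) < Q.degree := by exact_mod_cast hQdegpos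
      rw [hQcoeff 0 h0n, hG0, pow_two]
      intro hd
      exact hsum ((mul_dvd_mul_iff_left hpne).mp hd)
    · exact hQmonic.isPrimitive
  exact (hQmonic.irreducible_iff_irreducible_map_fraction_map).mp hirr
end

section
/- Let n ≥ 4, let P₁, …, Pₙ be polynomials of degree at most n - 1 with real coefficients, write Pᵢ(t) = Σ_{j=0}^{n-1} a_{i,j} t^j, and let A = (a_{i,j})_{1 ≤ i ≤ n, 0 ≤ j ≤ n-1} be their coefficient matrix. For any reals x₀, y₀, let M be the n × n matrix whose i-th column is (Pᵢ(x₀), Pᵢ(y₀), Pᵢ'(x₀), Pᵢ'(y₀), a_{i,4}, a_{i,5}, …, a_{i,n-1})ᵀ. Then |det M| = (y₀ - x₀)⁴·|det A|. In particular, if the Pᵢ are linearly independent and x₀ ≠ y₀, then det M ≠ 0. -/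
open Polynomial

/-- Determinant identity: for polynomials `P₁, …, Pₙ` of degree at most `n - 1` with
coefficient matrix `A`, and the matrix `M` whose `i`-th column is
`(Pᵢ(x₀), Pᵢ(y₀), Pᵢ'(x₀), Pᵢ'(y₀), a_{i,4}, …, a_{i,n-1})ᵀ`, one has
`|det M| = (y₀ - x₀)⁴·|det A|`; in particular, if the `Pᵢ` are linearly independent and
`x₀ ≠ y₀`, then `det M ≠ 0`. -/
theorem det_eval_matrix_eq (n : ℕ) (hn : 4 ≤ n) (P : Fin n → Polynomial ℝ)
    (hdeg : ∀ i, (P i).natDegree ≤ n - 1) (x₀ y₀ : ℝ)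
    (A : Matrix (Fin n) (Fin n) ℝ) (hA : A = Matrix.of fun i j : Fin n => (P i).coeff (j : ℕ))
    (M : Matrix (Fin n) (Fin n) ℝ)
    (hM : M = Matrix.of fun r i : Fin n =>
      if (r : ℕ) = 0 then (P i).eval x₀
      else if (r : ℕ) = 1 then (P i).eval y₀
      else if (r : ℕ) = 2 then ((P i).derivative).eval x₀
      else if (r : ℕ) = 3 then ((P i).derivative).eval y₀
      else (P i).coeff (r : ℕ)) :
    |M.det| = (y₀ - x₀) ^ 4 * |A.det| ∧
      (LinearIndependent ℝ P → x₀ ≠ y₀ → M.det ≠ 0) := by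
  obtain ⟨m, rfl⟩ : ∃ m, n = 4 + m := ⟨n - 4, by omega⟩
  -- the "generalized Vandermonde" matrix B with M = B * A.transpose
  set B : Matrix (Fin (4 + m)) (Fin (4 + m)) ℝ := Matrix.of fun r j =>
    if (r : ℕ) = 0 then x₀ ^ (j : ℕ)
    else if (r : ℕ) = 1 then y₀ ^ (j : ℕ)
    else if (r : ℕ) = 2 then ((j : ℕ) : ℝ) * x₀ ^ ((j : ℕ) - 1)
    else if (r : ℕ) = 3 then ((j : ℕ) : ℝ) * y₀ ^ ((j : ℕ) - 1)
    else if (r : ℕ) = (j : ℕ) then 1 else 0 with hB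
  have hdeg' : ∀ i, (P i).natDegree < 4 + m := fun i => by have := hdeg i; omega
  have hdderiv : ∀ i, ((P i).derivative).natDegree < 3 + m := fun i => by
    have h1 := natDegree_derivative_le (P i); have := hdeg i; omega
  have hevalx : ∀ (z : ℝ) i, (P i).eval z = ∑ j : Fin (4 + m), z ^ (j : ℕ) * (P i).coeff j := by
    intro z i
    rw [Polynomial.eval_eq_sum_range' (hdeg' i), ← Fin.sum_univ_eq_sum_range]
    exact Finset.sum_congr rfl fun j _ => mul_comm _ _
  have hderiv : ∀ (z : ℝ) i, ((P i).derivative).eval z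
      = ∑ j : Fin (4 + m), ((j : ℕ) : ℝ) * z ^ ((j : ℕ) - 1) * (P i).coeff j := by
    intro z i
    have hr : ∑ j : Fin (4 + m), ((j : ℕ) : ℝ) * z ^ ((j : ℕ) - 1) * (P i).coeff (j : ℕ)
        = ∑ j ∈ Finset.range (4 + m),
            ((j : ℝ) * z ^ (j - 1) * (P i).coeff j) :=
      Fin.sum_univ_eq_sum_range (fun k => (k : ℝ) * z ^ (k - 1) * (P i).coeff k) (4 + m)
    rw [Polynomial.eval_eq_sum_range' (hdderiv i), hr,
      show 4 + m = (3 + m) + 1 from by omega, Finset.sum_range_succ']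
    simp only [Nat.cast_zero, zero_mul, mul_zero, zero_mul, add_zero]
    refine Finset.sum_congr rfl fun j hj => ?_
    rw [Polynomial.coeff_derivative]
    push_cast [Nat.add_sub_cancel]
    ring
  have hMBA : M = B * A.transpose := by
    ext r i
    rw [hM, Matrix.mul_apply]
    simp only [Matrix.of_apply, hB, Matrix.transpose_apply, hA]
    by_cases hr0 : (r : ℕ) = 0
    · simp only [hr0]; norm_num [hevalx]
    by_cases hr1 : (r : ℕ) = 1
    · simp only [hr1]; norm_num [hevalx]
    by_cases hr2 : (r : ℕ) = 2
    · simp only [hr2]; norm_num [hderiv]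
    by_cases hr3 : (r : ℕ) = 3
    · simp only [hr3]; norm_num [hderiv]
    · simp only [hr0, hr1, hr2, hr3, reduceIte, Fin.val_eq_val, ite_mul, one_mul, zero_mul]
      rw [Finset.sum_ite_eq]
      simp
  -- block decomposition of B
  set e : Fin 4 ⊕ Fin m ≃ Fin (4 + m) := finSumFinEquiv with he
  set C : Matrix (Fin 4) (Fin 4) ℝ :=
    Matrix.of fun r j => B (e (Sum.inl r)) (e (Sum.inl j)) with hC
  set D : Matrix (Fin 4) (Fin m) ℝ :=
    Matrix.of fun r j => B (e (Sum.inl r)) (e (Sum.inr j)) with hD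
  have hcoel : ∀ j : Fin 4, ((e (Sum.inl j) : Fin (4 + m)) : ℕ) = (j : ℕ) := by
    intro j; simp [he]
  have hcoer : ∀ j : Fin m, ((e (Sum.inr j) : Fin (4 + m)) : ℕ) = 4 + (j : ℕ) := by
    intro j; simp [he]
  have hsub : B.submatrix e e = Matrix.fromBlocks C D 0 1 := by
    ext r j
    cases r with
    | inl r =>
      cases j with
      | inl j => rfl
      | inr j => rfl
    | inr r =>
      cases j with
      | inl j =>
        show B (e (Sum.inr r)) (e (Sum.inl j)) = 0
        have hj : (j : ℕ) < 4 := j.isLt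
        simp only [hB, Matrix.of_apply, hcoel, hcoer]
        rw [if_neg (by omega), if_neg (by omega), if_neg (by omega), if_neg (by omega),
          if_neg (by omega)]
      | inr j =>
        show B (e (Sum.inr r)) (e (Sum.inr j)) = (1 : Matrix (Fin m) (Fin m) ℝ) r j
        simp only [hB, Matrix.of_apply, hcoer, Matrix.one_apply]
        rw [if_neg (by omega), if_neg (by omega), if_neg (by omega), if_neg (by omega)]
        by_cases h : r = j
        · simp [h]
        · rw [if_neg h, if_neg fun hc => h (Fin.ext (by omega))]
  have hdetB : B.det = C.det := by
    rw [← Matrix.det_submatrix_equiv_self e B, hsub, Matrix.det_fromBlocks_zero₂₁,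
      Matrix.det_one, mul_one]
  have hCval : C = !![1, x₀, x₀ ^ 2, x₀ ^ 3; 1, y₀, y₀ ^ 2, y₀ ^ 3;
      0, 1, 2 * x₀, 3 * x₀ ^ 2; 0, 1, 2 * y₀, 3 * y₀ ^ 2] := by
    ext r j
    fin_cases r <;> fin_cases j <;>
      simp only [hC, Matrix.of_apply, hB, hcoel] <;> norm_num
  have hdetC : C.det = -((y₀ - x₀) ^ 4) := by
    rw [hCval, Matrix.det_succ_row_zero]
    simp [Fin.sum_univ_succ, Matrix.det_fin_three, Fin.succAbove]
    ring
  have hdetM : M.det = -((y₀ - x₀) ^ 4) * A.det := by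
    rw [hMBA, Matrix.det_mul, Matrix.det_transpose, hdetB, hdetC]
  constructor
  · rw [hdetM, abs_mul, abs_neg, abs_of_nonneg (by positivity : (0:ℝ) ≤ (y₀ - x₀) ^ 4)]
  · intro hLI hxy
    have hAdet : A.det ≠ 0 := by
      intro hdet
      obtain ⟨v, hv, hvz⟩ := (Matrix.exists_vecMul_eq_zero_iff).mpr hdet
      have hq : ∑ i, v i • P i = 0 := by
        ext k
        simp only [Polynomial.finset_sum_coeff, Polynomial.coeff_smul, smul_eq_mul,
          Polynomial.coeff_zero]
        by_cases hk : k < 4 + m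
        · have := congrFun hvz ⟨k, hk⟩
          simpa [Matrix.vecMul, dotProduct, hA] using this
        · refine Finset.sum_eq_zero fun i _ => ?_
          rw [Polynomial.coeff_eq_zero_of_natDegree_lt (by have := hdeg i; omega), mul_zero]
      have := Fintype.linearIndependent_iff.mp hLI v hq
      exact hv (funext this)
    rw [hdetM]
    intro h
    rcases mul_eq_zero.mp h with h | h
    · have h4 : (y₀ - x₀) ^ 4 = 0 := neg_eq_zero.mp h
      have h0 := pow_eq_zero_iff (by norm_num : (4:ℕ) ≠ 0) |>.mp h4
      exact hxy (by linarith)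
    · exact hAdet h
end
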